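/- Let V be a complex Hilbert space, P a projection-valued Borel homomorphism on V, and ψ ∈ V a unit vector. Let [ψ]^𝔓 denote the closure of the linear span of {P(X)ψ : X Borel ⊆ 2^ω}. If ν is a Borel probability measure on 2^ω that is absolutely continuous with respect to μ_ψ, then there exists ψ' ∈ [ψ]^𝔓 such that for every Borel X ⊆ 2^ω, ν(X) = ‖P(X)ψ'‖². -/

import Mathlib

open Filter

/-- A projection-valued Borel homomorphism on a complex Hilbert space `V`, defined on the
Borel subsets of `2^ω = ℕ → Bool`. -/
structure PVBorelHom (V : Type*) [NormedAddCommGroup V] [InnerProductSpace ℂ V]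
    [CompleteSpace V] where
  /-- The assignment of an operator to each (Borel) subset of `ℕ → Bool`. -/
  P : Set (ℕ → Bool) → (V →L[ℂ] V)
  idem : ∀ X, MeasurableSet X → P X ∘L P X = P X
  selfAdj : ∀ X, MeasurableSet X → IsSelfAdjoint (P X)
  comm : ∀ X Y, MeasurableSet X → MeasurableSet Y → P X ∘L P Y = P Y ∘L P X
  map_univ : P Set.univ = 1
  map_compl : ∀ X, MeasurableSet X → P Xᶜ = 1 - P X
  map_inter : ∀ X Y, MeasurableSet X → MeasurableSet Y → P (X ∩ Y) = P X ∘L P Y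
  countablyAdditive : ∀ X : ℕ → Set (ℕ → Bool), (∀ n, MeasurableSet (X n)) →
    Pairwise (Function.onFun Disjoint X) → ∀ ψ : V,
    Tendsto (fun N => ∑ n ∈ Finset.range N, P (X n) ψ) atTop (nhds (P (⋃ n, X n) ψ))

/-- The cylinder `I_σ` determined by a finite binary string `σ`. -/
def cylinder {n : ℕ} (σ : Fin n → Bool) : Set (ℕ → Bool) :=
  {f | ∀ m : Fin n, f (m : ℕ) = σ m}

/-- The set `L_q` of binary sequences whose frequency statistic tends to `q`. -/
def freqLimitSet (q : ℝ) : Set (ℕ → Bool) :=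
  {f | Tendsto
    (fun N : ℕ => ((((Finset.range N).filter (fun n => f n = true)).card : ℝ) / N))
    atTop (nhds q)}

/-- The mode `[ψ]^𝔓`: the closure of the linear span of the orbit of `ψ` under the
projections `P(X)` for Borel `X`. -/
def cyclicSpace {V : Type*} [NormedAddCommGroup V] [InnerProductSpace ℂ V] [CompleteSpace V]
    (H : PVBorelHom V) (ψ : V) : Set V :=
  closure (Submodule.span ℂ
    {v : V | ∃ X : Set (ℕ → Bool), MeasurableSet X ∧ v = H.P X ψ} : Set V)


section Helpers

open MeasureTheory

variable {V : Type*} [NormedAddCommGroup V] [InnerProductSpace ℂ V] [CompleteSpace V]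

lemma norm_sq_eq_of_inner_eq' {w : V} {r : ℝ} (h : (inner ℂ w w : ℂ) = (r : ℂ)) :
    ‖w‖ ^ 2 = r := by
  have h2 := inner_self_eq_norm_sq_to_K (𝕜 := ℂ) w
  rw [h2] at h
  have h3 : ((‖w‖ ^ 2 : ℝ) : ℂ) = (r : ℂ) := by push_cast; exact h
  exact Complex.ofReal_inj.mp h3

lemma norm_sum_sq_of_pairwise_inner_eq_zero' {ι : Type*} (s : Finset ι) (v : ι → V)
    (h : ∀ i ∈ s, ∀ j ∈ s, i ≠ j → (inner ℂ (v i) (v j) : ℂ) = 0) :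
    ‖∑ i ∈ s, v i‖ ^ 2 = ∑ i ∈ s, ‖v i‖ ^ 2 := by
  have key : (inner ℂ (∑ i ∈ s, v i) (∑ i ∈ s, v i) : ℂ)
      = ∑ i ∈ s, (inner ℂ (v i) (v i) : ℂ) := by
    rw [sum_inner]
    refine Finset.sum_congr rfl fun i hi => ?_
    rw [inner_sum]
    exact Finset.sum_eq_single_of_mem i hi fun j hj hji => h i hi j hj (Ne.symm hji)
  calc ‖∑ i ∈ s, v i‖ ^ 2
      = RCLike.re (inner ℂ (∑ i ∈ s, v i) (∑ i ∈ s, v i) : ℂ) :=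
        (inner_self_eq_norm_sq (𝕜 := ℂ) _).symm
    _ = RCLike.re (∑ i ∈ s, (inner ℂ (v i) (v i) : ℂ)) := by rw [key]
    _ = ∑ i ∈ s, RCLike.re (inner ℂ (v i) (v i) : ℂ) := map_sum _ _ _
    _ = ∑ i ∈ s, ‖v i‖ ^ 2 :=
        Finset.sum_congr rfl fun i _ => inner_self_eq_norm_sq (𝕜 := ℂ) _

namespace PVBorelHom

variable (H : PVBorelHom V) (ψ : V)

lemma map_empty : H.P ∅ = 0 := by
  have h := H.map_compl Set.univ MeasurableSet.univ
  rw [Set.compl_univ, H.map_univ] at h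
  rw [h]; simp

lemma inner_apply {X Y : Set (ℕ → Bool)} (hX : MeasurableSet X) (hY : MeasurableSet Y) :
    (inner ℂ (H.P X ψ) (H.P Y ψ) : ℂ) = ((‖H.P (X ∩ Y) ψ‖ ^ 2 : ℝ) : ℂ) := by
  have h1 : (inner ℂ (H.P X ψ) (H.P Y ψ) : ℂ) = inner ℂ ψ (H.P (X ∩ Y) ψ) := by
    rw [(H.selfAdj X hX).isSymmetric.apply_clm, H.map_inter X Y hX hY]
    rfl
  have hZ : MeasurableSet (X ∩ Y) := hX.inter hY
  have h2 : (inner ℂ ψ (H.P (X ∩ Y) ψ) : ℂ)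
      = inner ℂ (H.P (X ∩ Y) ψ) (H.P (X ∩ Y) ψ) := by
    conv_lhs => rw [← H.idem _ hZ]
    rw [ContinuousLinearMap.comp_apply, ← (H.selfAdj _ hZ).isSymmetric.apply_clm]
  rw [h1, h2, inner_self_eq_norm_sq_to_K]
  norm_cast

/-- The spectral measure `μ_ψ`. -/
noncomputable def specMeasure : Measure (ℕ → Bool) :=
  Measure.ofMeasurable (fun X _ => ENNReal.ofReal (‖H.P X ψ‖ ^ 2))
    (by simp [PVBorelHom.map_empty])
    (by
      intro f hf hd
      have horth : ∀ i j, i ≠ j → (inner ℂ (H.P (f i) ψ) (H.P (f j) ψ) : ℂ) = 0 := by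
        intro i j hij
        rw [H.inner_apply ψ (hf i) (hf j), Set.disjoint_iff_inter_eq_empty.mp (hd hij),
          H.map_empty]
        simp
      have hpyth : ∀ N : ℕ, ‖∑ n ∈ Finset.range N, H.P (f n) ψ‖ ^ 2
          = ∑ n ∈ Finset.range N, ‖H.P (f n) ψ‖ ^ 2 := fun N =>
        norm_sum_sq_of_pairwise_inner_eq_zero' _ _ fun i _ j _ hij => horth i j hij
      have htend := H.countablyAdditive f hf hd ψ
      have hnorm : Tendsto (fun N => ∑ n ∈ Finset.range N, ‖H.P (f n) ψ‖ ^ 2) atTop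
          (nhds (‖H.P (⋃ n, f n) ψ‖ ^ 2)) := by
        have h2 := htend.norm.pow 2
        simpa only [hpyth] using h2
      have hsum : HasSum (fun n => ‖H.P (f n) ψ‖ ^ 2) (‖H.P (⋃ n, f n) ψ‖ ^ 2) :=
        (hasSum_iff_tendsto_nat_of_nonneg (fun i => sq_nonneg _) _).mpr hnorm
      show ENNReal.ofReal (‖H.P (⋃ i, f i) ψ‖ ^ 2)
          = ∑' i, ENNReal.ofReal (‖H.P (f i) ψ‖ ^ 2)
      rw [← hsum.tsum_eq,
        ENNReal.ofReal_tsum_of_nonneg (fun n => sq_nonneg _) hsum.summable])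

lemma specMeasure_apply {X : Set (ℕ → Bool)} (hX : MeasurableSet X) :
    specMeasure H ψ X = ENNReal.ofReal (‖H.P X ψ‖ ^ 2) :=
  Measure.ofMeasurable_apply X hX

instance : IsFiniteMeasure (specMeasure H ψ) :=
  ⟨by rw [specMeasure_apply H ψ MeasurableSet.univ]; exact ENNReal.ofReal_lt_top⟩

lemma specMeasure_toReal {X : Set (ℕ → Bool)} (hX : MeasurableSet X) :
    (specMeasure H ψ X).toReal = ‖H.P X ψ‖ ^ 2 := by
  rw [specMeasure_apply H ψ hX, ENNReal.toReal_ofReal (sq_nonneg _)]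

end PVBorelHom

end Helpers

section Helpers2

open MeasureTheory

variable {V : Type*} [NormedAddCommGroup V] [InnerProductSpace ℂ V] [CompleteSpace V]

namespace PVBorelHom

variable (H : PVBorelHom V) (ψ : V)

/-- The vector `∑ c • P(s⁻¹{c}) ψ` associated to a simple function `s`. -/
noncomputable def stepVec (s : SimpleFunc (ℕ → Bool) ℝ) : V :=
  ∑ c ∈ s.range, (c : ℂ) • H.P (s ⁻¹' {c}) ψ

lemma inner_P_stepVec {X : Set (ℕ → Bool)} (hX : MeasurableSet X)
    (s t : SimpleFunc (ℕ → Bool) ℝ) :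
    (inner ℂ (H.P X (H.stepVec ψ s)) (H.P X (H.stepVec ψ t)) : ℂ)
      = ((∫ x in X, s x * t x ∂(specMeasure H ψ) : ℝ) : ℂ) := by
  have happly : ∀ A B : Set (ℕ → Bool), MeasurableSet A → MeasurableSet B →
      (inner ℂ (H.P X (H.P A ψ)) (H.P X (H.P B ψ)) : ℂ)
        = (((specMeasure H ψ) (X ∩ (A ∩ B))).toReal : ℂ) := by
    intro A B hA hB
    have e1 : H.P X (H.P A ψ) = H.P (X ∩ A) ψ := by rw [H.map_inter X A hX hA]; rfl
    have e2 : H.P X (H.P B ψ) = H.P (X ∩ B) ψ := by rw [H.map_inter X B hX hB]; rfl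
    have e3 : (X ∩ A) ∩ (X ∩ B) = X ∩ (A ∩ B) := by
      rw [Set.inter_inter_inter_comm, Set.inter_self]
    rw [e1, e2, H.inner_apply ψ (hX.inter hA) (hX.inter hB), e3,
      specMeasure_toReal H ψ (hX.inter (hA.inter hB))]
  -- expand the left-hand side as a double sum
  have hlhs : (inner ℂ (H.P X (H.stepVec ψ s)) (H.P X (H.stepVec ψ t)) : ℂ)
      = ∑ c ∈ s.range, ∑ d ∈ t.range,
          (c : ℂ) * (d : ℂ) *
            (((specMeasure H ψ) (X ∩ (s ⁻¹' {c} ∩ t ⁻¹' {d}))).toReal : ℂ) := by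
    rw [stepVec, stepVec, map_sum, map_sum, sum_inner]
    refine Finset.sum_congr rfl fun c _ => ?_
    rw [inner_sum]
    refine Finset.sum_congr rfl fun d _ => ?_
    rw [_root_.map_smul, _root_.map_smul, inner_smul_left, inner_smul_right,
      happly _ _ (s.measurableSet_preimage _) (t.measurableSet_preimage _)]
    rw [Complex.conj_ofReal]
    ring
  -- expand the right-hand side as the same double sum
  have hpt : ∀ x, ∑ c ∈ s.range, ∑ d ∈ t.range,
      (s ⁻¹' {c} ∩ t ⁻¹' {d}).indicator (fun _ => c * d) x = s x * t x := by
    intro x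
    rw [Finset.sum_eq_single_of_mem (s x) (s.mem_range_self x)]
    · rw [Finset.sum_eq_single_of_mem (t x) (t.mem_range_self x)]
      · rw [Set.indicator_of_mem (by simp : x ∈ s ⁻¹' {s x} ∩ t ⁻¹' {t x})]
      · intro d _ hdx
        apply Set.indicator_of_notMem
        simp only [Set.mem_inter_iff, Set.mem_preimage, Set.mem_singleton_iff]
        exact fun h => hdx h.2.symm
    · intro c _ hcx
      apply Finset.sum_eq_zero
      intro d _
      apply Set.indicator_of_notMem
      simp only [Set.mem_inter_iff, Set.mem_preimage, Set.mem_singleton_iff]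
      exact fun h => hcx h.1.symm
  have hind : ∀ c d : ℝ, MeasurableSet (s ⁻¹' {c} ∩ t ⁻¹' {d}) := fun c d =>
    (s.measurableSet_preimage _).inter (t.measurableSet_preimage _)
  have hint : ∀ c d : ℝ, Integrable ((s ⁻¹' {c} ∩ t ⁻¹' {d}).indicator (fun _ => c * d))
      ((specMeasure H ψ).restrict X) := fun c d =>
    (integrable_const _).indicator (hind c d)
  have hrhs : ∫ x in X, s x * t x ∂(specMeasure H ψ)
      = ∑ c ∈ s.range, ∑ d ∈ t.range,
          c * d * ((specMeasure H ψ) (X ∩ (s ⁻¹' {c} ∩ t ⁻¹' {d}))).toReal := by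
    calc ∫ x in X, s x * t x ∂(specMeasure H ψ)
        = ∫ x in X, (∑ c ∈ s.range, ∑ d ∈ t.range,
            (s ⁻¹' {c} ∩ t ⁻¹' {d}).indicator (fun _ => c * d) x) ∂(specMeasure H ψ) := by
          simp only [hpt]
      _ = ∑ c ∈ s.range, ∫ x in X, (∑ d ∈ t.range,
            (s ⁻¹' {c} ∩ t ⁻¹' {d}).indicator (fun _ => c * d) x) ∂(specMeasure H ψ) :=
          integral_finset_sum _ fun c _ => integrable_finset_sum _ fun d _ => hint c d
      _ = ∑ c ∈ s.range, ∑ d ∈ t.range, ∫ x in X,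
            (s ⁻¹' {c} ∩ t ⁻¹' {d}).indicator (fun _ => c * d) x ∂(specMeasure H ψ) :=
          Finset.sum_congr rfl fun c _ => integral_finset_sum _ fun d _ => hint c d
      _ = ∑ c ∈ s.range, ∑ d ∈ t.range,
            c * d * ((specMeasure H ψ) (X ∩ (s ⁻¹' {c} ∩ t ⁻¹' {d}))).toReal := by
          refine Finset.sum_congr rfl fun c _ => Finset.sum_congr rfl fun d _ => ?_
          rw [integral_indicator_const _ (hind c d), measureReal_def, Measure.restrict_apply (hind c d),
            Set.inter_comm, smul_eq_mul]
          ring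
  rw [hlhs, hrhs]
  push_cast
  rfl

lemma norm_P_stepVec_sq {X : Set (ℕ → Bool)} (hX : MeasurableSet X)
    (s : SimpleFunc (ℕ → Bool) ℝ) :
    ‖H.P X (H.stepVec ψ s)‖ ^ 2 = ∫ x in X, (s x) ^ 2 ∂(specMeasure H ψ) := by
  apply norm_sq_eq_of_inner_eq'
  rw [H.inner_P_stepVec ψ hX s s]
  norm_cast
  refine integral_congr_ae (Filter.Eventually.of_forall fun x => ?_)
  simp [pow_two]

lemma norm_P_stepVec_sub_sq {X : Set (ℕ → Bool)} (hX : MeasurableSet X)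
    (s t : SimpleFunc (ℕ → Bool) ℝ) :
    ‖H.P X (H.stepVec ψ s) - H.P X (H.stepVec ψ t)‖ ^ 2
      = ∫ x in X, (s x - t x) ^ 2 ∂(specMeasure H ψ) := by
  have hI : ∀ a b : SimpleFunc (ℕ → Bool) ℝ,
      Integrable (fun x => a x * b x) ((specMeasure H ψ).restrict X) := by
    intro a b
    have h := (a * b).integrable_of_isFiniteMeasure (μ := (specMeasure H ψ).restrict X)
    exact h
  apply norm_sq_eq_of_inner_eq'
  rw [inner_sub_sub_self, H.inner_P_stepVec ψ hX s s, H.inner_P_stepVec ψ hX s t,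
    H.inner_P_stepVec ψ hX t s, H.inner_P_stepVec ψ hX t t]
  have hts : ∫ x in X, t x * s x ∂(specMeasure H ψ) = ∫ x in X, s x * t x ∂(specMeasure H ψ) :=
    integral_congr_ae (Filter.Eventually.of_forall fun x => mul_comm _ _)
  have hexp : ∫ x in X, (s x - t x) ^ 2 ∂(specMeasure H ψ)
      = ∫ x in X, s x * s x ∂(specMeasure H ψ) - 2 * ∫ x in X, s x * t x ∂(specMeasure H ψ)
        + ∫ x in X, t x * t x ∂(specMeasure H ψ) := by
    have hfun : (fun x => (s x - t x) ^ 2)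
        = fun x => s x * s x - 2 * (s x * t x) + t x * t x := funext fun x => by ring
    have h1 : Integrable (fun x => s x * s x - 2 * (s x * t x))
        ((specMeasure H ψ).restrict X) := (hI s s).sub ((hI s t).const_mul 2)
    rw [hfun]
    simp only [integral_add h1 (hI t t), integral_sub (hI s s) ((hI s t).const_mul 2),
      integral_const_mul]
  rw [hts, hexp]
  push_cast
  ring

end PVBorelHom

end Helpers2

open MeasureTheory

/-- every Borel probability measure `ν` on `2^ω` that is absolutely continuous
with respect to `μ_ψ` (for a unit vector `ψ`) arises as `μ_{ψ'}` for some `ψ' ∈ [ψ]^𝔓`. -/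
theorem exists_vector_of_absolutelyContinuous
    {V : Type*} [NormedAddCommGroup V] [InnerProductSpace ℂ V] [CompleteSpace V]
    (H : PVBorelHom V) (ψ : V) (hψ : ‖ψ‖ = 1)
    (ν : MeasureTheory.Measure (ℕ → Bool)) [MeasureTheory.IsProbabilityMeasure ν]
    (hac : ∀ X : Set (ℕ → Bool), MeasurableSet X → ‖H.P X ψ‖ = 0 → ν X = 0) :
    ∃ ψ' ∈ cyclicSpace H ψ, ∀ X : Set (ℕ → Bool), MeasurableSet X →
      ν X = ENNReal.ofReal (‖H.P X ψ'‖ ^ 2) := by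
  classical
  set μ := H.specMeasure ψ with hμdef
  have hνμ : ν ≪ μ := by
    refine Measure.AbsolutelyContinuous.mk fun X hX h0 => ?_
    apply hac X hX
    have h0' : ENNReal.ofReal (‖H.P X ψ‖ ^ 2) = 0 := by
      rw [← H.specMeasure_apply ψ hX]; exact h0
    have h1 : ‖H.P X ψ‖ ^ 2 ≤ 0 := ENNReal.ofReal_eq_zero.mp h0'
    nlinarith [norm_nonneg (H.P X ψ)]
  set f := ν.rnDeriv μ with hfdef
  haveI : IsFiniteMeasure μ := inferInstanceAs (IsFiniteMeasure (H.specMeasure ψ))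
  haveI : ν.HaveLebesgueDecomposition μ := Measure.haveLebesgueDecomposition_of_sigmaFinite ν μ
  have hν_eq : μ.withDensity f = ν := Measure.withDensity_rnDeriv_eq ν μ hνμ
  have hf_lt : ∀ᵐ x ∂μ, f x < ⊤ := Measure.rnDeriv_lt_top ν μ
  set g : (ℕ → Bool) → ℝ := fun x => Real.sqrt (f x).toReal with hgdef
  have hg_meas : Measurable g := (Measure.measurable_rnDeriv ν μ).ennreal_toReal.sqrt
  have hg_nonneg : ∀ x, 0 ≤ g x := fun x => Real.sqrt_nonneg _
  have hkey : ∀ X : Set (ℕ → Bool), MeasurableSet X →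
      ∫⁻ x in X, ENNReal.ofReal (g x ^ 2) ∂μ = ν X := by
    intro X hX
    have h1 : ∀ᵐ x ∂μ, ENNReal.ofReal (g x ^ 2) = f x := by
      filter_upwards [hf_lt] with x hx
      rw [hgdef]
      rw [Real.sq_sqrt ENNReal.toReal_nonneg, ENNReal.ofReal_toReal hx.ne]
    calc ∫⁻ x in X, ENNReal.ofReal (g x ^ 2) ∂μ = ∫⁻ x in X, f x ∂μ :=
          lintegral_congr_ae (ae_restrict_of_ae h1)
      _ = μ.withDensity f X := (withDensity_apply f hX).symm
      _ = ν X := by rw [hν_eq]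
  have hg2_int : Integrable (fun x => g x ^ 2) μ := by
    refine ⟨(hg_meas.pow_const 2).aestronglyMeasurable, ?_⟩
    rw [hasFiniteIntegral_iff_ofReal (Filter.Eventually.of_forall fun x => sq_nonneg _)]
    have h2 := hkey Set.univ MeasurableSet.univ
    rw [Measure.restrict_univ] at h2
    rw [h2]
    exact measure_lt_top ν Set.univ
  set sf : ℕ → SimpleFunc (ℕ → Bool) ℝ :=
    fun n => SimpleFunc.approxOn g hg_meas Set.univ 0 (Set.mem_univ 0) n with hsfdef
  have hsf_tend : ∀ x, Filter.Tendsto (fun n => sf n x) Filter.atTop (nhds (g x)) := fun x =>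
    SimpleFunc.tendsto_approxOn hg_meas _ (by simp)
  have hsf_bd : ∀ n x, |sf n x - g x| ≤ g x := by
    intro n x
    have h := SimpleFunc.edist_approxOn_le hg_meas (Set.mem_univ (0:ℝ)) x n
    rw [edist_dist, edist_dist] at h
    have h2 : dist (sf n x) (g x) ≤ dist (0:ℝ) (g x) :=
      (ENNReal.ofReal_le_ofReal_iff dist_nonneg).mp h
    rw [Real.dist_eq, Real.dist_eq] at h2
    have h3 : |(0:ℝ) - g x| = g x := by
      rw [zero_sub, abs_neg, abs_of_nonneg (hg_nonneg x)]
    rw [h3] at h2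
    exact h2
  have hsf_abs : ∀ n x, |sf n x| ≤ 2 * g x := by
    intro n x
    calc |sf n x| = |(sf n x - g x) + g x| := by congr 1; ring
      _ ≤ |sf n x - g x| + |g x| := abs_add_le _ _
      _ ≤ g x + g x := add_le_add (hsf_bd n x) (le_of_eq (abs_of_nonneg (hg_nonneg x)))
      _ = 2 * g x := by ring
  have hsq_bd : ∀ n x, (sf n x - g x) ^ 2 ≤ g x ^ 2 := by
    intro n x
    nlinarith [hsf_bd n x, abs_nonneg (sf n x - g x), sq_abs (sf n x - g x)]
  have hsq2_bd : ∀ n x, (sf n x) ^ 2 ≤ 4 * g x ^ 2 := by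
    intro n x
    nlinarith [hsf_abs n x, abs_nonneg (sf n x), sq_abs (sf n x), hg_nonneg x]
  have hdiff_int : ∀ n, Integrable (fun x => (sf n x - g x) ^ 2) μ := by
    intro n
    refine hg2_int.mono (((sf n).measurable.sub hg_meas).pow_const 2).aestronglyMeasurable
      (Filter.Eventually.of_forall fun x => ?_)
    rw [Real.norm_eq_abs, Real.norm_eq_abs, abs_of_nonneg (sq_nonneg _),
      abs_of_nonneg (sq_nonneg _)]
    exact hsq_bd n x
  set δ : ℕ → ℝ := fun n => ∫ x, (sf n x - g x) ^ 2 ∂μ with hδdef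
  have hδ_tend : Filter.Tendsto δ Filter.atTop (nhds 0) := by
    have h := tendsto_integral_of_dominated_convergence (μ := μ)
      (F := fun n x => (sf n x - g x) ^ 2) (f := fun _ => (0:ℝ)) (fun x => g x ^ 2)
      (fun n => (((sf n).measurable.sub hg_meas).pow_const 2).aestronglyMeasurable)
      hg2_int
      (fun n => Filter.Eventually.of_forall fun x => by
        rw [Real.norm_eq_abs, abs_of_nonneg (sq_nonneg _)]; exact hsq_bd n x)
      (Filter.Eventually.of_forall fun x => by
        have h2 : Filter.Tendsto (fun n => (sf n x - g x) ^ 2) Filter.atTop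
            (nhds ((g x - g x) ^ 2)) := ((hsf_tend x).sub tendsto_const_nhds).pow 2
        simpa using h2)
    simpa using h
  have hδ_nonneg : ∀ n, 0 ≤ δ n := fun n => integral_nonneg fun x => sq_nonneg _
  set u : ℕ → V := fun n => H.stepVec ψ (sf n) with hudef
  have hsub : ∀ n m : ℕ, ‖u n - u m‖ ^ 2 ≤ 2 * δ n + 2 * δ m := by
    intro n m
    have he : u n - u m
        = H.P Set.univ (H.stepVec ψ (sf n)) - H.P Set.univ (H.stepVec ψ (sf m)) := by
      rw [H.map_univ]; rfl
    rw [he, H.norm_P_stepVec_sub_sq ψ MeasurableSet.univ, Measure.restrict_univ]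
    have hle : ∀ x, (sf n x - sf m x) ^ 2
        ≤ 2 * (sf n x - g x) ^ 2 + 2 * (sf m x - g x) ^ 2 := fun x => by
      nlinarith [sq_nonneg ((sf n x - g x) + (sf m x - g x))]
    have hR : Integrable (fun x => 2 * (sf n x - g x) ^ 2 + 2 * (sf m x - g x) ^ 2) μ :=
      ((hdiff_int n).const_mul 2).add ((hdiff_int m).const_mul 2)
    have hL : Integrable (fun x => (sf n x - sf m x) ^ 2) μ := by
      refine hR.mono (((sf n).measurable.sub (sf m).measurable).pow_const 2).aestronglyMeasurable
        (Filter.Eventually.of_forall fun x => ?_)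
      rw [Real.norm_eq_abs, Real.norm_eq_abs, abs_of_nonneg (sq_nonneg _),
        abs_of_nonneg (by positivity)]
      exact hle x
    calc ∫ x, (sf n x - sf m x) ^ 2 ∂μ
        ≤ ∫ x, 2 * (sf n x - g x) ^ 2 + 2 * (sf m x - g x) ^ 2 ∂μ := integral_mono hL hR hle
      _ = 2 * δ n + 2 * δ m := by
          rw [integral_add ((hdiff_int n).const_mul 2) ((hdiff_int m).const_mul 2),
            integral_const_mul, integral_const_mul]
  have hcauchy : CauchySeq u := by
    rw [Metric.cauchySeq_iff]
    intro ε hε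
    have hq : (0:ℝ) < ε ^ 2 / 8 := by positivity
    have hev : ∀ᶠ n in Filter.atTop, δ n < ε ^ 2 / 8 := hδ_tend.eventually_lt_const hq
    obtain ⟨N, hN⟩ := Filter.eventually_atTop.mp hev
    refine ⟨N, fun m hm n hn => ?_⟩
    rw [dist_eq_norm]
    have h3 : ‖u m - u n‖ ^ 2 < ε ^ 2 := by
      have h4 := hN m hm
      have h5 := hN n hn
      have h6 := hsub m n
      nlinarith
    exact lt_of_pow_lt_pow_left₀ 2 (le_of_lt hε) h3
  obtain ⟨ψ', hψ'lim⟩ := cauchySeq_tendsto_of_complete hcauchy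
  have hspan : ∀ n, u n ∈ (Submodule.span ℂ
      {v : V | ∃ X : Set (ℕ → Bool), MeasurableSet X ∧ v = H.P X ψ} : Submodule ℂ V) := by
    intro n
    refine Submodule.sum_mem _ fun c _ => Submodule.smul_mem _ _ (Submodule.subset_span ?_)
    exact ⟨(sf n) ⁻¹' {c}, (sf n).measurableSet_preimage _, rfl⟩
  have hmem : ψ' ∈ cyclicSpace H ψ := by
    rw [cyclicSpace]
    exact mem_closure_of_tendsto hψ'lim (Filter.Eventually.of_forall fun n => hspan n)
  refine ⟨ψ', hmem, fun X hX => ?_⟩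
  have hPlim : Filter.Tendsto (fun n => H.P X (u n)) Filter.atTop (nhds (H.P X ψ')) :=
    ((H.P X).continuous.tendsto ψ').comp hψ'lim
  have h1 : Filter.Tendsto (fun n => ‖H.P X (u n)‖ ^ 2) Filter.atTop
      (nhds (‖H.P X ψ'‖ ^ 2)) := hPlim.norm.pow 2
  have h2 : ∀ n, ‖H.P X (u n)‖ ^ 2 = ∫ x in X, (sf n x) ^ 2 ∂μ := fun n =>
    H.norm_P_stepVec_sq ψ hX (sf n)
  have h3 : Filter.Tendsto (fun n => ∫ x in X, (sf n x) ^ 2 ∂μ) Filter.atTop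
      (nhds (∫ x in X, g x ^ 2 ∂μ)) :=
    tendsto_integral_of_dominated_convergence (fun x => 4 * g x ^ 2)
      (fun n => ((sf n).measurable.pow_const 2).aestronglyMeasurable)
      ((hg2_int.const_mul 4).restrict)
      (fun n => Filter.Eventually.of_forall fun x => by
        rw [Real.norm_eq_abs, abs_of_nonneg (sq_nonneg _)]; exact hsq2_bd n x)
      (Filter.Eventually.of_forall fun x => (hsf_tend x).pow 2)
  have h4 : ‖H.P X ψ'‖ ^ 2 = ∫ x in X, g x ^ 2 ∂μ := by
    have h1' : Filter.Tendsto (fun n => ∫ x in X, (sf n x) ^ 2 ∂μ) Filter.atTop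
        (nhds (‖H.P X ψ'‖ ^ 2)) := by simpa only [h2] using h1
    exact tendsto_nhds_unique h1' h3
  rw [← hkey X hX,
    ← ofReal_integral_eq_lintegral_ofReal hg2_int.restrict
      (Filter.Eventually.of_forall fun x => sq_nonneg _), h4]
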